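/- For all real z ≥ 0, one has (4z · coth(πz/2)) / (π · √(z² + 1)) ≤ 4/π, i.e. z · coth(πz/2) ≤ √(z² + 1). -/
import Mathlib


open Real

/-- For all real `z ≥ 0`, `z * coth (π z / 2) ≤ √(z² + 1)`, i.e.
`(4 z coth(π z/2)) / (π √(z²+1)) ≤ 4/π`. (At `z = 0` the left-hand side is `0`
by the convention `sinh 0 = 0` and division by zero.) -/
theorem coth_estimate (z : ℝ) (hz : 0 ≤ z) :
    z * (Real.cosh (Real.pi * z / 2) / Real.sinh (Real.pi * z / 2)) ≤
      Real.sqrt (z ^ 2 + 1) := by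
  rcases eq_or_lt_of_le hz with h | hz
  · simp [← h, Real.sqrt_nonneg]
  · set t := Real.pi * z / 2 with ht
    have htpos : 0 < t := by
      have := Real.pi_pos
      positivity
    have hs : 0 < Real.sinh t := Real.sinh_pos_iff.mpr htpos
    have hzt : z ≤ t := by
      have := Real.pi_gt_three
      rw [ht]; nlinarith
    have hzs : z ≤ Real.sinh t := hzt.trans (Real.self_lt_sinh_iff.mpr htpos).le
    rw [Real.le_sqrt (by positivity)]
    rw [mul_pow, div_pow, mul_div_assoc', div_le_iff₀ (by positivity)]
    have hcs := Real.cosh_sq t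
    nlinarith [sq_nonneg (Real.sinh t)]
    positivity
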